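/- For every positive integer m, Σ_{l=1}^{m} tan^4(πl/(2m+1)) = (m/3)·(2m+1)·(4m² + 6m − 1). -/

import Mathlib

open Real Finset


/-- parity split of a range sum -/
lemma tfs_sum_range_two_mul (n : ℕ) (f : ℕ → ℝ) :
    ∑ j ∈ Finset.range (2*n), f j = ∑ k ∈ Finset.range n, (f (2*k) + f (2*k+1)) := by
  induction n with
  | zero => simp
  | succ n ih =>
    have h : 2*(n+1) = (2*n)+1+1 := by ring
    rw [Finset.sum_range_succ, ← ih, h, Finset.sum_range_succ, Finset.sum_range_succ]
    ring_nf

lemma tfs_im_pow (m : ℕ) (t : ℝ) :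
    ((1 + (t:ℂ) * Complex.I) ^ (2*m+1)).im
      = ∑ k ∈ Finset.range (m+1), (-1:ℝ)^k * ((2*m+1).choose (2*k+1)) * t^(2*k+1) := by
  rw [add_comm (1:ℂ), add_pow, Complex.im_sum]
  have h2 : 2*m+1+1 = 2*(m+1) := by ring
  rw [h2, tfs_sum_range_two_mul (m+1)
    (fun j => ((((t:ℂ) * Complex.I))^j * 1^(2*m+1-j) * ((2*m+1).choose j : ℂ)).im)]
  apply Finset.sum_congr rfl
  intro k _
  have hsq : ((t:ℂ) * Complex.I)^2 = ((-(t^2) : ℝ) : ℂ) := by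
    rw [mul_pow, Complex.I_sq]; push_cast; ring
  have he : ((t:ℂ) * Complex.I)^(2*k) = ((((-1:ℝ))^k * t^(2*k) : ℝ) : ℂ) := by
    rw [pow_mul, hsq, ← Complex.ofReal_pow]
    congr 1
    rw [pow_mul]; ring
  have ho : ((t:ℂ) * Complex.I)^(2*k+1) = (((-1:ℝ)^k * t^(2*k+1) : ℝ) : ℂ) * Complex.I := by
    rw [pow_succ, he]
    push_cast
    ring
  rw [ho, he, show ((((-1:ℝ))^k * t^(2*k) : ℝ) : ℂ) * 1^(2*m+1-2*k) * ((2*m+1).choose (2*k) : ℂ)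
      = ((((-1:ℝ))^k * t^(2*k) * ((2*m+1).choose (2*k)) : ℝ) : ℂ) from by push_cast; ring,
    show (((-1:ℝ)^k * t^(2*k+1) : ℝ) : ℂ) * Complex.I * 1^(2*m+1-(2*k+1)) * ((2*m+1).choose (2*k+1) : ℂ)
      = (((-1:ℝ)^k * t^(2*k+1) * ((2*m+1).choose (2*k+1)) : ℝ) : ℂ) * Complex.I from by push_cast; ring]
  simp only [Complex.ofReal_im, Complex.mul_I_im, Complex.ofReal_re]
  ring

lemma tfs_theta_mem {m l : ℕ} (h1 : 1 ≤ l) (h2 : l ≤ m) :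
    0 < Real.pi * l / (2*m+1) ∧ Real.pi * l / (2*m+1) < Real.pi / 2 := by
  have hπ := Real.pi_pos
  have hl : (1:ℝ) ≤ l := by exact_mod_cast h1
  have hlm : (l:ℝ) ≤ m := by exact_mod_cast h2
  have hN : (0:ℝ) < 2*m+1 := by positivity
  constructor
  · apply div_pos (by nlinarith) hN
  · rw [div_lt_iff₀ hN]
    nlinarith

lemma tfs_root (m l : ℕ) (h1 : 1 ≤ l) (h2 : l ≤ m) :
    ∑ k ∈ Finset.range (m+1), (-1:ℝ)^k * ((2*m+1).choose (2*k+1)) *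
      (Real.tan (Real.pi * l / (2*m+1)) ^ 2)^k = 0 := by
  obtain ⟨hθ0, hθ1⟩ := tfs_theta_mem h1 h2
  set θ : ℝ := Real.pi * l / (2*m+1) with hθ
  have hcos : 0 < Real.cos θ := Real.cos_pos_of_mem_Ioo ⟨by linarith, hθ1⟩
  have htpos : 0 < Real.tan θ := Real.tan_pos_of_pos_of_lt_pi_div_two hθ0 hθ1
  set t := Real.tan θ with htdef
  have hN : (0:ℝ) < 2*m+1 := by positivity
  have hne : (Real.cos θ : ℂ) ≠ 0 := Complex.ofReal_ne_zero.mpr hcos.ne'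
  have hmul : ((Real.cos θ : ℝ) : ℂ) * (1 + (t:ℂ) * Complex.I) = Complex.exp (θ * Complex.I) := by
    rw [Complex.exp_mul_I, ← Complex.ofReal_cos, ← Complex.ofReal_sin]
    have ht : Real.cos θ * t = Real.sin θ := by
      rw [htdef, Real.tan_eq_sin_div_cos]; field_simp
    calc ((Real.cos θ : ℝ) : ℂ) * (1 + (t:ℂ) * Complex.I)
        = ((Real.cos θ : ℝ) : ℂ) + ((Real.cos θ * t : ℝ) : ℂ) * Complex.I := by push_cast; ring
      _ = _ := by rw [ht]
  have hkey : (1 + (t:ℂ) * Complex.I) = (((Real.cos θ)⁻¹ : ℝ) : ℂ) * Complex.exp (θ * Complex.I) := by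
    rw [← hmul, Complex.ofReal_inv, inv_mul_cancel_left₀ hne]
  have him : ((1 + (t:ℂ) * Complex.I) ^ (2*m+1)).im = 0 := by
    rw [hkey, mul_pow, ← Complex.exp_nat_mul]
    have harg : ((2*m+1 : ℕ) : ℂ) * (θ * Complex.I) = ((Real.pi * l : ℝ) : ℂ) * Complex.I := by
      push_cast
      rw [hθ]
      have : ((2:ℂ)*m+1) ≠ 0 := by
        exact_mod_cast Complex.ofReal_ne_zero.mpr hN.ne'
      push_cast
      field_simp
    rw [harg, Complex.exp_mul_I, ← Complex.ofReal_cos, ← Complex.ofReal_sin]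
    have hsin : Real.sin (Real.pi * l) = 0 := by
      rw [mul_comm]; exact Real.sin_nat_mul_pi l
    rw [hsin]
    simp [← Complex.ofReal_pow, ← Complex.ofReal_inv, ← Complex.ofReal_mul]
  rw [tfs_im_pow] at him
  have hfac : ∑ k ∈ Finset.range (m+1), (-1:ℝ)^k * ((2*m+1).choose (2*k+1)) * t^(2*k+1)
      = (∑ k ∈ Finset.range (m+1), (-1:ℝ)^k * ((2*m+1).choose (2*k+1)) * (t^2)^k) * t := by
    rw [Finset.sum_mul]
    apply Finset.sum_congr rfl
    intro k _
    ring
  rw [hfac, mul_eq_zero] at him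
  rcases him with h | h
  · exact h
  · exact absurd h htpos.ne'

lemma tfs_sq_sum (s : Finset ℕ) (f : ℕ → ℝ) :
    (∑ i ∈ s, f i)^2 = ∑ i ∈ s, f i^2 + 2 * ∑ t ∈ s.powersetCard 2, ∏ i ∈ t, f i := by
  classical
  induction s using Finset.induction_on with
  | empty =>
    rw [Finset.powersetCard_eq_empty.mpr (by simp)]
    simp
  | insert a s ha ih =>
    rw [Finset.sum_insert ha, Finset.sum_insert ha, Finset.powersetCard_succ_insert ha]
    rw [Finset.sum_union]
    · rw [Finset.sum_image]
      · have h1 : ∀ t ∈ s.powersetCard 1, ∏ i ∈ insert a t, f i = f a * ∏ i ∈ t, f i := by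
          intro t ht
          have hat : a ∉ t := fun hc => ha ((Finset.mem_powersetCard.mp ht).1 hc)
          rw [Finset.prod_insert hat]
        rw [Finset.sum_congr rfl h1, ← Finset.mul_sum]
        have h2 : ∑ t ∈ s.powersetCard 1, ∏ i ∈ t, f i = ∑ i ∈ s, f i := by
          rw [Finset.powersetCard_one, Finset.sum_map]
          simp
        rw [h2]
        rw [show Nat.succ 1 = 2 from rfl] -- normalize
        nlinarith [ih]
      · intro t ht u hu htu
        have hat : a ∉ t := fun hc => ha ((Finset.mem_powersetCard.mp ht).1 hc)
        have hau : a ∉ u := fun hc => ha ((Finset.mem_powersetCard.mp hu).1 hc)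
        have := congrArg (Finset.erase · a) htu
        simpa [Finset.erase_insert, hat, hau] using this
    · rw [Finset.disjoint_left]
      intro t ht htu
      obtain ⟨u, hu, rfl⟩ := Finset.mem_image.mp htu
      have : a ∈ insert a u := Finset.mem_insert_self a u
      exact ha ((Finset.mem_powersetCard.mp ht).1 this)

lemma tfs_main (n : ℕ) :
    ∑ l ∈ Finset.Icc 1 (n+2), (Real.tan (Real.pi * l / (2 * (n+2) + 1))) ^ 4 =
      (((n:ℝ)+2) / 3) * (2 * ((n:ℝ)+2) + 1) * (4 * ((n:ℝ)+2) ^ 2 + 6 * ((n:ℝ)+2) - 1) := by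
  classical
  set m : ℕ := n + 2 with hmdef
  set s : Finset ℕ := Finset.Icc 1 m with hsdef
  set r : ℕ → ℝ := fun l => Real.tan (Real.pi * l / (2 * m + 1)) ^ 2 with hrdef
  have hcard : s.card = m := by simp [hsdef]
  -- monotonicity / injectivity
  have hmono : ∀ l ∈ s, ∀ l' ∈ s, l < l' → r l < r l' := by
    intro l hl l' hl' hll
    simp only [hsdef, Finset.mem_Icc] at hl hl'
    obtain ⟨h0l, hθl⟩ := tfs_theta_mem hl.1 hl.2
    obtain ⟨h0l', hθl'⟩ := tfs_theta_mem hl'.1 hl'.2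
    have hN : (0:ℝ) < 2*m+1 := by positivity
    have hθlt : Real.pi * l / (2*m+1) < Real.pi * l' / (2*m+1) := by
      have hll' : (l:ℝ) < l' := by exact_mod_cast hll
      have hπ := Real.pi_pos
      gcongr

    have htan : Real.tan (Real.pi * l / (2*m+1)) < Real.tan (Real.pi * l' / (2*m+1)) :=
      Real.tan_lt_tan_of_nonneg_of_lt_pi_div_two h0l.le hθl' hθlt
    have hpos : 0 ≤ Real.tan (Real.pi * l / (2*m+1)) :=
      (Real.tan_pos_of_pos_of_lt_pi_div_two h0l hθl).le
    simpa [hrdef] using pow_lt_pow_left₀ htan hpos (by norm_num)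
  have hinj : Set.InjOn r s := by
    intro a ha b hb hab
    rcases lt_trichotomy a b with h | h | h
    · exact absurd hab (hmono a ha b hb h).ne
    · exact h
    · exact absurd hab.symm (hmono b hb a ha h).ne
  -- polynomials
  set P : Polynomial ℝ := ∏ l ∈ s, (Polynomial.X - Polynomial.C (r l)) with hPdef
  set Q : Polynomial ℝ := ∑ k ∈ Finset.range (m+1),
      Polynomial.C ((-1:ℝ)^k * ((2*m+1).choose (2*k+1) : ℝ)) * Polynomial.X ^ k with hQdef
  have hPmonic : P.Monic := Polynomial.monic_prod_of_monic _ _ fun i _ => Polynomial.monic_X_sub_C _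
  have hPdeg : P.natDegree = m := by
    rw [hPdef, Polynomial.natDegree_prod _ _ fun i _ => Polynomial.X_sub_C_ne_zero _]
    simp [Polynomial.natDegree_X_sub_C, hcard]
  have hQdeg : Q.natDegree ≤ m := by
    apply Polynomial.natDegree_sum_le_of_forall_le
    intro k hk
    exact le_trans (Polynomial.natDegree_C_mul_X_pow_le _ _) (by
      simp only [Finset.mem_range] at hk; omega)
  have hQc : ∀ k, k ≤ m → Q.coeff k = (-1:ℝ)^k * ((2*m+1).choose (2*k+1) : ℝ) := by
    intro k hk
    rw [hQdef, Polynomial.finset_sum_coeff]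
    simp only [Polynomial.coeff_C_mul, Polynomial.coeff_X_pow]
    rw [Finset.sum_eq_single k]
    · simp
    · intro j _ hjk
      simp [Ne.symm hjk]
    · intro hknot
      exact absurd (Finset.mem_range.mpr (by omega)) hknot
  have hQm : Q.coeff m = (-1:ℝ)^m := by
    rw [hQc m le_rfl, show 2*m+1 = (2*m+1) from rfl, Nat.choose_self]
    simp
  have hPm : P.coeff m = 1 := by
    have := hPmonic.leadingCoeff
    rwa [Polynomial.leadingCoeff, hPdeg] at this
  set D : Polynomial ℝ := Q - Polynomial.C ((-1:ℝ)^m) * P with hDdef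
  have hDdeg : D.natDegree ≤ m := le_trans (Polynomial.natDegree_sub_le _ _)
    (max_le hQdeg (le_trans (Polynomial.natDegree_C_mul_le _ _) hPdeg.le))
  have hDm : D.coeff m = 0 := by
    rw [hDdef, Polynomial.coeff_sub, Polynomial.coeff_C_mul, hQm, hPm, mul_one, sub_self]
  have hevalP : ∀ l ∈ s, P.eval (r l) = 0 := by
    intro l hl
    rw [hPdef, Polynomial.eval_prod]
    apply Finset.prod_eq_zero hl
    simp
  have hevalQ : ∀ l ∈ s, Q.eval (r l) = 0 := by
    intro l hl
    simp only [hsdef, Finset.mem_Icc] at hl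
    have := tfs_root m l hl.1 hl.2
    rw [hQdef, Polynomial.eval_finset_sum]
    simpa [hrdef] using this
  have heval : ∀ l ∈ s, D.eval (r l) = 0 := by
    intro l hl
    rw [hDdef]
    simp [hevalP l hl, hevalQ l hl]
  have hD0 : D = 0 := by
    by_cases hD : D = 0
    · exact hD
    have hcardim : (s.image r).card = m := by
      rw [Finset.card_image_of_injOn hinj, hcard]
    apply Polynomial.eq_zero_of_natDegree_lt_card_of_eval_eq_zero' D (s.image r)
    · intro x hx
      obtain ⟨l, hl, rfl⟩ := Finset.mem_image.mp hx
      exact heval l hl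
    · rw [hcardim]
      rcases lt_or_eq_of_le hDdeg with h | h
      · exact h
      · exfalso
        apply hD
        apply Polynomial.leadingCoeff_eq_zero.mp
        rw [Polynomial.leadingCoeff, h, hDm]
  have hQP : Q = Polynomial.C ((-1:ℝ)^m) * P := by
    have := sub_eq_zero.mp hD0
    exact this
  -- coefficient extraction
  have hPc : ∀ k, k ≤ m → P.coeff k
      = (-1:ℝ)^(m-k) * ∑ t ∈ s.powersetCard (m-k), ∏ i ∈ t, r i := by
    intro k hk
    have hmap : P = ((s.val.map r).map (fun x => Polynomial.X - Polynomial.C x)).prod := by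
      rw [hPdef, Multiset.map_map]
      rfl
    have hcards : Multiset.card (s.val.map r) = m := by
      rw [Multiset.card_map]; exact hcard
    rw [hmap, Multiset.prod_X_sub_C_coeff _ (by rw [hcards]; omega), hcards,
      Finset.esymm_map_val]
  have he1 : ∑ t ∈ s.powersetCard 1, ∏ i ∈ t, r i = ∑ l ∈ s, r l := by
    rw [Finset.powersetCard_one]
    simp
  -- first Vieta equation
  have hco1 : Q.coeff (n+1) = (-1:ℝ)^m * P.coeff (n+1) := by
    rw [hQP, Polynomial.coeff_C_mul]
  rw [hQc (n+1) (by omega), hPc (n+1) (by omega), show m - (n+1) = 1 from by omega, he1]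
    at hco1
  have hS1 : ∑ l ∈ s, r l = (((2*m+1).choose (2*(n+1)+1) : ℕ) : ℝ) := by
    rw [show ((-1:ℝ)^m) = (-1:ℝ)^n from by rw [hmdef]; ring] at hco1
    refine mul_left_cancel₀ (a := (-1:ℝ)^(n+1)) (pow_ne_zero _ (by norm_num)) ?_
    linear_combination -hco1
  -- second Vieta equation
  have hco2 : Q.coeff n = (-1:ℝ)^m * P.coeff n := by
    rw [hQP, Polynomial.coeff_C_mul]
  rw [hQc n (by omega), hPc n (by omega), show m - n = 2 from by omega] at hco2
  have hS2 : ∑ t ∈ s.powersetCard 2, ∏ i ∈ t, r i = (((2*m+1).choose (2*n+1) : ℕ) : ℝ) := by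
    rw [show ((-1:ℝ)^m) = (-1:ℝ)^n from by rw [hmdef]; ring] at hco2
    refine mul_left_cancel₀ (a := (-1:ℝ)^n) (pow_ne_zero _ (by norm_num)) ?_
    linear_combination -hco2
  -- binomial coefficient values
  have hch1 : (2*m+1).choose (2*(n+1)+1) = (n+2)*(2*n+5) := by
    rw [hmdef, show 2*(n+2)+1 = 2*n+5 from by ring,
      show 2*(n+1)+1 = (2*n+5) - 2 from by omega, Nat.choose_symm (by omega)]
    have hd := Nat.descFactorial_eq_factorial_mul_choose (2*n+5) 2
    simp [Nat.descFactorial_succ, Nat.descFactorial_zero, Nat.factorial] at hd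
    have h2 : (2*n+4)*(2*n+5) = 2*((n+2)*(2*n+5)) := by ring
    omega
  have hch2 : 24 * (2*m+1).choose (2*n+1) = (2*n+2)*(2*n+3)*(2*n+4)*(2*n+5) := by
    rw [hmdef, show 2*(n+2)+1 = 2*n+5 from by ring,
      show 2*n+1 = (2*n+5) - 4 from by omega, Nat.choose_symm (by omega)]
    have hd := Nat.descFactorial_eq_factorial_mul_choose (2*n+5) 4
    simp [Nat.descFactorial_succ, Nat.descFactorial_zero, Nat.factorial] at hd
    have h2 : (2*n+2)*((2*n+3)*((2*n+4)*((2*n+5)))) = (2*n+2)*(2*n+3)*(2*n+4)*(2*n+5) := by ring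
    nlinarith [hd, h2]
  -- final computation
  have hsum4 : ∑ l ∈ Finset.Icc 1 (n+2), (Real.tan (Real.pi * l / (2 * (n+2) + 1))) ^ 4
      = ∑ l ∈ s, (r l)^2 := by
    apply Finset.sum_congr (by rw [hsdef, hmdef])
    intro l _
    rw [hrdef]
    push_cast [hmdef]
    ring
  have hkey := tfs_sq_sum s r
  rw [hS1, hS2] at hkey
  rw [hsum4]
  have hc1R : (((2*m+1).choose (2*(n+1)+1) : ℕ) : ℝ) = ((n:ℝ)+2)*(2*(n:ℝ)+5) := by
    rw [hch1]; push_cast; ring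
  have hc2R : (24:ℝ) * (((2*m+1).choose (2*n+1) : ℕ) : ℝ)
      = (2*(n:ℝ)+2)*(2*(n:ℝ)+3)*(2*(n:ℝ)+4)*(2*(n:ℝ)+5) := by
    exact_mod_cast congrArg (Nat.cast : ℕ → ℝ) hch2
  rw [hc1R] at hkey
  linear_combination -hkey - (1/12 : ℝ) * hc2R

theorem tan_fourth_sum (m : ℕ) (hm : 0 < m) :
    ∑ l ∈ Finset.Icc 1 m, (Real.tan (Real.pi * l / (2 * m + 1))) ^ 4 =
      (m / 3) * (2 * m + 1) * (4 * m ^ 2 + 6 * m - 1) := by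
  rcases Nat.lt_or_ge m 2 with h | h
  · have hm1 : m = 1 := by omega
    subst hm1
    rw [Finset.Icc_self, Finset.sum_singleton]
    have harg : Real.pi * ((1:ℕ):ℝ) / (2 * ((1:ℕ):ℝ) + 1) = Real.pi / 3 := by
      push_cast; ring
    have h9 : (Real.sqrt 3)^4 = 9 := by
      rw [show (4:ℕ) = 2*2 from rfl, pow_mul, Real.sq_sqrt (by norm_num : (0:ℝ) ≤ 3)]
      norm_num
    rw [harg, Real.tan_pi_div_three, h9]
    norm_num
  · obtain ⟨n, rfl⟩ : ∃ n, m = n + 2 := ⟨m - 2, by omega⟩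
    rw [show (((n+2:ℕ)):ℝ) = (n:ℝ)+2 from by push_cast; ring]
    exact tfs_main n
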